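/- For every positive integer n, (1/n) * Σ_{k=1}^{n} gcd(n, k) = ∏_{p | n, p prime} (1 + (1 - 1/p) * ord_p(n)), where ord_p(n) is the p-adic valuation of n. -/

import Mathlib

open Finset Nat ArithmeticFunction
open scoped ArithmeticFunction.zeta

noncomputable def Gfun : ArithmeticFunction ℚ :=
  ⟨fun d => (Nat.totient d : ℚ) / d, by simp⟩

lemma Gfun_apply (d : ℕ) : Gfun d = (Nat.totient d : ℚ) / d := rfl

lemma Gfun_mult : Gfun.IsMultiplicative := by
  refine ⟨by simp [Gfun_apply], ?_⟩
  intro m k h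
  simp only [Gfun_apply]
  rcases eq_or_ne m 0 with rfl | hm
  · simp
  rcases eq_or_ne k 0 with rfl | hk
  · simp
  rw [Nat.totient_mul h]
  push_cast
  field_simp

lemma step1 (n : ℕ) (hn : 0 < n) :
    ∑ k ∈ Finset.Icc 1 n, Nat.gcd n k = ∑ d ∈ n.divisors, Nat.totient d * (n / d) := by
  have key : ∀ k ∈ Finset.Icc 1 n, Nat.gcd n k = ∑ d ∈ n.divisors with d ∣ k, Nat.totient d := by
    intro k hk
    rw [← Nat.sum_totient (Nat.gcd n k)]
    congr 1
    ext d
    simp only [Nat.mem_divisors, Finset.mem_filter, Nat.dvd_gcd_iff]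
    constructor
    · rintro ⟨⟨h1, h2⟩, h3⟩
      exact ⟨⟨h1, hn.ne'⟩, h2⟩
    · rintro ⟨⟨h1, _⟩, h2⟩
      refine ⟨⟨h1, h2⟩, ?_⟩
      exact Nat.gcd_ne_zero_left hn.ne'
  rw [Finset.sum_congr rfl key]
  rw [Finset.sum_comm' (t' := n.divisors) (s' := fun d => {k ∈ Finset.Icc 1 n | d ∣ k})]
  · refine Finset.sum_congr rfl fun d hd => ?_
    rw [Finset.sum_const, smul_eq_mul, mul_comm]
    congr 1
    have : Finset.Icc 1 n = Finset.Ioc 0 n := rfl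
    rw [this, Nat.Ioc_filter_dvd_card_eq_div]
  · intro k d
    simp only [Finset.mem_filter]
    tauto

lemma step2 (p a : ℕ) (hp : p.Prime) :
    ∑ d ∈ (p ^ a).divisors, Gfun d = 1 + (1 - 1 / (p : ℚ)) * a := by
  rw [Nat.sum_divisors_prime_pow hp]
  rw [Finset.sum_range_succ']
  have hp0 : (p : ℚ) ≠ 0 := Nat.cast_ne_zero.mpr hp.pos.ne'
  have : ∀ i ∈ Finset.range a, Gfun (p ^ (i + 1)) = 1 - 1 / (p : ℚ) := by
    intro i _
    rw [Gfun_apply, Nat.totient_prime_pow hp (Nat.succ_pos i), Nat.succ_sub_one]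
    push_cast [Nat.cast_sub hp.one_le]
    field_simp
    ring
  rw [Finset.sum_congr rfl this, Finset.sum_const, Finset.card_range,
    show Gfun (p ^ 0) = 1 by simp [Gfun_apply]]
  ring

theorem stmt_0 (n : ℕ) (hn : 0 < n) :
    (1 / (n : ℚ)) * ∑ k ∈ Finset.Icc 1 n, (Nat.gcd n k : ℚ) =
      ∏ p ∈ n.primeFactors, (1 + (1 - 1 / (p : ℚ)) * (n.factorization p : ℚ)) := by
  have hn0 : (n : ℚ) ≠ 0 := Nat.cast_ne_zero.mpr hn.ne'
  have h1 : ∑ k ∈ Finset.Icc 1 n, (Nat.gcd n k : ℚ)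
      = ∑ d ∈ n.divisors, (Nat.totient d : ℚ) * (n / d : ℕ) := by
    rw [← Nat.cast_sum, step1 n hn]
    push_cast
    rfl
  have h2 : ∑ d ∈ n.divisors, (Nat.totient d : ℚ) * (n / d : ℕ)
      = n * ∑ d ∈ n.divisors, Gfun d := by
    rw [Finset.mul_sum]
    refine Finset.sum_congr rfl fun d hd => ?_
    obtain ⟨hdn, -⟩ := Nat.mem_divisors.mp hd
    have hd0 : (d : ℚ) ≠ 0 := Nat.cast_ne_zero.mpr (Nat.pos_of_mem_divisors hd).ne'
    rw [Nat.cast_div_charZero hdn, Gfun_apply]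
    field_simp
  rw [h1, h2, ← mul_assoc, one_div_mul_cancel hn0, one_mul]
  have hmult : (Gfun * (ζ : ArithmeticFunction ℚ)).IsMultiplicative :=
    Gfun_mult.mul isMultiplicative_zeta.natCast
  have := hmult.multiplicative_factorization _ hn.ne'
  rw [show ∑ d ∈ n.divisors, Gfun d = (Gfun * (ζ : ArithmeticFunction ℚ)) n from
    (coe_mul_zeta_apply).symm, this]
  rw [Nat.prod_factorization_eq_prod_primeFactors]
  refine Finset.prod_congr rfl fun p hp => ?_
  rw [coe_mul_zeta_apply, step2 p _ (Nat.prime_of_mem_primeFactors hp)]
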